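/- There exists a constant C > 0, independent of h, f, and x, such that for every h > 0, every three times continuously differentiable function f : ℝ → ℝ whose third derivative is bounded by M, and every x ∈ ℝ, the grid interpolant built from Monaghan's modified B-spline is third-order accurate: |∑_{j ∈ ℤ} f(jh) · W₄(x − jh, h) − f(x)| ≤ C · M · h³. -/
import Mathlib


/-- Monaghan's modified cubic B-spline interpolation kernel `W₄`. -/
noncomputable def W4 (x h : ℝ) : ℝ :=
  let s := |x| / h
  if s ≤ 1 then 1 - 5/2 * s^2 + 3/2 * s^3
  else if s ≤ 2 then 1/2 * (2 - s)^2 * (1 - s)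
  else 0

open Set

private lemma W4_neg (x h : ℝ) : W4 (-x) h = W4 x h := by
  simp only [W4, abs_neg]

private lemma W4_of_ge {x h : ℝ} (hx : 2 ≤ |x| / h) : W4 x h = 0 := by
  simp only [W4]
  split_ifs with h1 h2
  · linarith
  · have h3 : |x| / h = 2 := le_antisymm h2 hx
    rw [h3]; norm_num
  · rfl

private lemma W4_eval {h : ℝ} (h0 : 0 < h) {s : ℝ} (hs : 0 ≤ s) :
    W4 (s * h) h =
      if s ≤ 1 then 1 - 5/2 * s^2 + 3/2 * s^3
      else if s ≤ 2 then 1/2 * (2 - s)^2 * (1 - s) else 0 := by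
  have hq : |s * h| / h = s := by
    rw [abs_of_nonneg (mul_nonneg hs h0.le)]
    field_simp
  simp only [W4, hq]

private lemma idw_eq {f : ℝ → ℝ} (hf : ContDiff ℝ 3 f) {a b : ℝ} (hab : a < b)
    {n : ℕ} (hn : n ≤ 3) {y : ℝ} (hy : y ∈ Icc a b) :
    iteratedDerivWithin n f (Icc a b) y = iteratedDeriv n f y := by
  have H : HasFTaylorSeriesUpToOn 3 f (ftaylorSeries ℝ f) (Icc a b) :=
    (contDiff_iff_ftaylorSeries.mp hf).hasFTaylorSeriesUpToOn _
  have h1 := H.eq_iteratedFDerivWithin_of_uniqueDiffOn (by exact_mod_cast hn)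
    (uniqueDiffOn_Icc hab) hy
  rw [iteratedDerivWithin_eq_iteratedFDerivWithin, ← h1, iteratedDeriv_eq_iteratedFDeriv]
  rfl

private lemma taylor_side {f : ℝ → ℝ} (hf : ContDiff ℝ 3 f) {M : ℝ}
    (hM : ∀ y : ℝ, |iteratedDeriv 3 f y| ≤ M) {a b : ℝ} (hab : a ≤ b) :
    |f b - (f a + deriv f a * (b - a) + iteratedDeriv 2 f a * (b - a) ^ 2 / 2)| ≤
      M * (b - a) ^ 3 / 2 := by
  rcases eq_or_lt_of_le hab with rfl | hlt
  · simp
  have hC : ∀ y ∈ Icc a b, ‖iteratedDerivWithin 3 f (Icc a b) y‖ ≤ M := by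
    intro y hy
    rw [Real.norm_eq_abs, idw_eq hf hlt (by norm_num) hy]
    exact hM y
  have hcd : ContDiffOn ℝ ((2 : ℕ) + 1) f (Icc a b) := by
    exact_mod_cast hf.contDiffOn
  have hbd := taylor_mean_remainder_bound (n := 2) hab hcd (right_mem_Icc.mpr hab) hC
  have ht : taylorWithinEval f 2 (Icc a b) a b
      = f a + deriv f a * (b - a) + iteratedDeriv 2 f a * (b - a) ^ 2 / 2 := by
    rw [taylor_within_apply]
    have h0 := idw_eq hf hlt (n := 0) (by norm_num) (left_mem_Icc.mpr hab)
    have h1 := idw_eq hf hlt (n := 1) (by norm_num) (left_mem_Icc.mpr hab)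
    have h2 := idw_eq hf hlt (n := 2) (by norm_num) (left_mem_Icc.mpr hab)
    rw [Finset.sum_range_succ, Finset.sum_range_succ, Finset.sum_range_one,
      h0, h1, h2, iteratedDeriv_zero, iteratedDeriv_one]
    simp [Nat.factorial]
    ring
  rw [ht, Real.norm_eq_abs] at hbd
  norm_num [Nat.factorial] at hbd
  convert hbd using 2

private lemma taylor3 {f : ℝ → ℝ} (hf : ContDiff ℝ 3 f) {M : ℝ}
    (hM : ∀ y : ℝ, |iteratedDeriv 3 f y| ≤ M) (x y : ℝ) :
    |f y - (f x + deriv f x * (y - x) + iteratedDeriv 2 f x * (y - x) ^ 2 / 2)| ≤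
      M * |y - x| ^ 3 / 2 := by
  rcases le_total x y with hxy | hxy
  · have := taylor_side hf hM hxy
    rwa [abs_of_nonneg (sub_nonneg.mpr hxy)]
  · -- use the reflected function
    have hFc : ContDiff ℝ 3 (fun s : ℝ => f (-s)) := hf.comp contDiff_neg
    have hMF : ∀ z : ℝ, |iteratedDeriv 3 (fun s : ℝ => f (-s)) z| ≤ M := by
      intro z
      rw [iteratedDeriv_comp_neg]
      simpa [abs_mul, abs_pow] using hM (-z)
    have hbd := taylor_side hFc hMF (neg_le_neg hxy)
    have e2 : deriv (fun s : ℝ => f (-s)) (-x) = -deriv f x := by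
      have := iteratedDeriv_comp_neg 1 f (-x)
      simpa [iteratedDeriv_one] using this
    have e3 : iteratedDeriv 2 (fun s : ℝ => f (-s)) (-x) = iteratedDeriv 2 f x := by
      have := iteratedDeriv_comp_neg 2 f (-x)
      simpa using this
    simp only [neg_neg, e2, e3] at hbd
    have harg : f y - (f x + deriv f x * (y - x) + iteratedDeriv 2 f x * (y - x) ^ 2 / 2)
        = f y - (f x + -deriv f x * (-y - -x) + iteratedDeriv 2 f x * (-y - -x) ^ 2 / 2) := by
      ring
    rw [harg, abs_of_nonpos (sub_nonpos.mpr hxy)]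
    calc |f y - (f x + -deriv f x * (-y - -x) + iteratedDeriv 2 f x * (-y - -x) ^ 2 / 2)|
        ≤ M * (-y - -x) ^ 3 / 2 := hbd
      _ = M * (-(y - x)) ^ 3 / 2 := by ring

private lemma wb1 {t : ℝ} (ht0 : 0 ≤ t) (ht1 : t < 1) : |(-(t * (1 - t) ^ 2) / 2)| ≤ 1 := by
  rw [abs_le]; constructor <;> nlinarith

private lemma wb2 {t : ℝ} (ht0 : 0 ≤ t) (ht1 : t < 1) : |1 - 5/2 * t ^ 2 + 3/2 * t ^ 3| ≤ 1 := by
  rw [abs_le]; constructor <;> nlinarith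

private lemma wb3 {t : ℝ} (ht0 : 0 ≤ t) (ht1 : t < 1) :
    |1 - 5/2 * (1 - t) ^ 2 + 3/2 * (1 - t) ^ 3| ≤ 1 := by
  rw [abs_le]; constructor <;> nlinarith

private lemma wb4 {t : ℝ} (ht0 : 0 ≤ t) (ht1 : t < 1) : |1/2 * t ^ 2 * (t - 1)| ≤ 1 := by
  rw [abs_le]; constructor <;> nlinarith

set_option maxHeartbeats 1000000 in
/-- The grid interpolant built from Monaghan's modified B-spline is third-order
accurate for `C³` functions with bounded third derivative. -/
theorem W4_third_order_accurate :
    ∃ C : ℝ, 0 < C ∧ ∀ (h : ℝ), 0 < h → ∀ (f : ℝ → ℝ) (M : ℝ),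
      ContDiff ℝ 3 f → (∀ y : ℝ, |iteratedDeriv 3 f y| ≤ M) →
      ∀ x : ℝ, |(∑' j : ℤ, f (j * h) * W4 (x - j * h) h) - f x| ≤ C * M * h ^ 3 := by
  refine ⟨16, by norm_num, ?_⟩
  intro h h0 f M hf hM x
  have hM0 : 0 ≤ M := (abs_nonneg _).trans (hM 0)
  obtain ⟨n, t, ht0, ht1, rfl⟩ :
      ∃ (n : ℤ) (t : ℝ), 0 ≤ t ∧ t < 1 ∧ x = ((n : ℝ) + t) * h := by
    refine ⟨⌊x / h⌋, x / h - ⌊x / h⌋, sub_nonneg.mpr (Int.floor_le _), ?_, by field_simp; ring⟩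
    have := Int.lt_floor_add_one (x / h)
    linarith
  set x : ℝ := ((n : ℝ) + t) * h with hxdef
  -- the summand vanishes outside {n-1, n, n+1, n+2}
  have hsupp : ∀ j : ℤ, j ∉ ({n - 1, n, n + 1, n + 2} : Finset ℤ) →
      f (j * h) * W4 (x - j * h) h = 0 := by
    intro j hj
    have hj' : j ≤ n - 2 ∨ n + 3 ≤ j := by
      simp only [Finset.mem_insert, Finset.mem_singleton] at hj
      omega
    have hz : W4 (x - j * h) h = 0 := by
      apply W4_of_ge
      rw [le_div_iff₀ h0]
      rcases hj' with hj2 | hj2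
      · have hc : (j : ℝ) ≤ (n : ℝ) - 2 := by exact_mod_cast hj2
        rw [abs_of_nonneg (by rw [hxdef]; nlinarith)]
        rw [hxdef]; nlinarith
      · have hc : (n : ℝ) + 3 ≤ (j : ℝ) := by exact_mod_cast hj2
        rw [abs_of_nonpos (by rw [hxdef]; nlinarith)]
        rw [hxdef]; nlinarith
    rw [hz, mul_zero]
  rw [tsum_eq_sum hsupp]
  -- expand the four-term sum
  have h1 : (n - 1) ∉ ({n, n + 1, n + 2} : Finset ℤ) := by
    simp only [Finset.mem_insert, Finset.mem_singleton]; omega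
  have h2 : n ∉ ({n + 1, n + 2} : Finset ℤ) := by
    simp only [Finset.mem_insert, Finset.mem_singleton]; omega
  have h3 : (n + 1) ∉ ({n + 2} : Finset ℤ) := by
    simp only [Finset.mem_singleton]; omega
  rw [Finset.sum_insert h1, Finset.sum_insert h2, Finset.sum_insert h3,
    Finset.sum_singleton]
  push_cast
  -- kernel values
  have a1 : x - ((n : ℝ) - 1) * h = (1 + t) * h := by rw [hxdef]; ring
  have a2 : x - (n : ℝ) * h = t * h := by rw [hxdef]; ring
  have a3 : x - ((n : ℝ) + 1) * h = -((1 - t) * h) := by rw [hxdef]; ring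
  have a4 : x - ((n : ℝ) + 2) * h = -((2 - t) * h) := by rw [hxdef]; ring
  have v1 : W4 (x - ((n : ℝ) - 1) * h) h = -(t * (1 - t) ^ 2) / 2 := by
    rw [a1, W4_eval h0 (by linarith)]
    by_cases hc : (1 : ℝ) + t ≤ 1
    · have ht : t = 0 := le_antisymm (by linarith) ht0
      rw [if_pos hc, ht]; norm_num
    · rw [if_neg hc, if_pos (by linarith)]; ring
  have v2 : W4 (x - (n : ℝ) * h) h = 1 - 5/2 * t ^ 2 + 3/2 * t ^ 3 := by
    rw [a2, W4_eval h0 ht0, if_pos ht1.le]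
  have v3 : W4 (x - ((n : ℝ) + 1) * h) h = 1 - 5/2 * (1 - t) ^ 2 + 3/2 * (1 - t) ^ 3 := by
    rw [a3, W4_neg, W4_eval h0 (by linarith), if_pos (by linarith)]
  have v4 : W4 (x - ((n : ℝ) + 2) * h) h = 1/2 * t ^ 2 * (t - 1) := by
    rw [a4, W4_neg, W4_eval h0 (by linarith), if_neg (by intro hc; linarith),
      if_pos (by linarith)]
    ring
  rw [v1, v2, v3, v4]
  -- Taylor remainders
  set p : ℝ := deriv f x with hp
  set q : ℝ := iteratedDeriv 2 f x with hq
  set E : ℝ → ℝ := fun y => f y - (f x + p * (y - x) + q * (y - x) ^ 2 / 2) with hE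
  have hEbd : ∀ y : ℝ, |y - x| ≤ 2 * h → |E y| ≤ 4 * M * h ^ 3 := by
    intro y hy
    have hT := taylor3 hf hM x y
    have h8 : |y - x| ^ 3 ≤ (2 * h) ^ 3 := pow_le_pow_left₀ (abs_nonneg _) hy 3
    calc |E y| ≤ M * |y - x| ^ 3 / 2 := hT
      _ ≤ M * (2 * h) ^ 3 / 2 := by
          have := mul_le_mul_of_nonneg_left h8 hM0
          linarith
      _ = 4 * M * h ^ 3 := by ring
  -- the key algebraic identity (uses the moment conditions of the kernel)
  have key : f (((n : ℝ) - 1) * h) * (-(t * (1 - t) ^ 2) / 2)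
        + (f ((n : ℝ) * h) * (1 - 5/2 * t ^ 2 + 3/2 * t ^ 3)
        + (f (((n : ℝ) + 1) * h) * (1 - 5/2 * (1 - t) ^ 2 + 3/2 * (1 - t) ^ 3)
        + f (((n : ℝ) + 2) * h) * (1/2 * t ^ 2 * (t - 1)))) - f x
      = E (((n : ℝ) - 1) * h) * (-(t * (1 - t) ^ 2) / 2)
        + E ((n : ℝ) * h) * (1 - 5/2 * t ^ 2 + 3/2 * t ^ 3)
        + E (((n : ℝ) + 1) * h) * (1 - 5/2 * (1 - t) ^ 2 + 3/2 * (1 - t) ^ 3)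
        + E (((n : ℝ) + 2) * h) * (1/2 * t ^ 2 * (t - 1)) := by
    simp only [hE, hxdef]
    ring
  rw [key]
  -- bound each of the four terms
  have hw1 := wb1 ht0 ht1
  have hw2 := wb2 ht0 ht1
  have hw3 := wb3 ht0 ht1
  have hw4 := wb4 ht0 ht1
  have hE1 : |E (((n : ℝ) - 1) * h)| ≤ 4 * M * h ^ 3 := by
    apply hEbd
    have : ((n : ℝ) - 1) * h - x = -((1 + t) * h) := by rw [hxdef]; ring
    rw [this, abs_neg, abs_of_nonneg (mul_nonneg (by linarith) h0.le)]
    exact mul_le_mul_of_nonneg_right (by linarith) h0.le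
  have hE2 : |E ((n : ℝ) * h)| ≤ 4 * M * h ^ 3 := by
    apply hEbd
    have : (n : ℝ) * h - x = -(t * h) := by rw [hxdef]; ring
    rw [this, abs_neg, abs_of_nonneg (mul_nonneg ht0 h0.le)]
    exact mul_le_mul_of_nonneg_right (by linarith) h0.le
  have hE3 : |E (((n : ℝ) + 1) * h)| ≤ 4 * M * h ^ 3 := by
    apply hEbd
    have : ((n : ℝ) + 1) * h - x = (1 - t) * h := by rw [hxdef]; ring
    rw [this, abs_of_nonneg (mul_nonneg (by linarith) h0.le)]
    exact mul_le_mul_of_nonneg_right (by linarith) h0.le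
  have hE4 : |E (((n : ℝ) + 2) * h)| ≤ 4 * M * h ^ 3 := by
    apply hEbd
    have : ((n : ℝ) + 2) * h - x = (2 - t) * h := by rw [hxdef]; ring
    rw [this, abs_of_nonneg (mul_nonneg (by linarith) h0.le)]
    exact mul_le_mul_of_nonneg_right (by linarith) h0.le
  have habcd : ∀ a b c d : ℝ, |a + b + c + d| ≤ |a| + |b| + |c| + |d| := by
    intro a b c d
    calc |a + b + c + d| ≤ |a + b + c| + |d| := abs_add_le _ _
      _ ≤ |a + b| + |c| + |d| := by linarith [abs_add_le (a + b) c]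
      _ ≤ |a| + |b| + |c| + |d| := by linarith [abs_add_le a b]
  have hterm : ∀ (u w : ℝ), |u| ≤ 4 * M * h ^ 3 → |w| ≤ 1 → |u * w| ≤ 4 * M * h ^ 3 := by
    intro u w hu hw
    rw [abs_mul]
    calc |u| * |w| ≤ (4 * M * h ^ 3) * 1 :=
          mul_le_mul hu hw (abs_nonneg _) (by positivity)
      _ = 4 * M * h ^ 3 := by ring
  calc |E (((n : ℝ) - 1) * h) * (-(t * (1 - t) ^ 2) / 2)
        + E ((n : ℝ) * h) * (1 - 5/2 * t ^ 2 + 3/2 * t ^ 3)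
        + E (((n : ℝ) + 1) * h) * (1 - 5/2 * (1 - t) ^ 2 + 3/2 * (1 - t) ^ 3)
        + E (((n : ℝ) + 2) * h) * (1/2 * t ^ 2 * (t - 1))|
      ≤ |E (((n : ℝ) - 1) * h) * (-(t * (1 - t) ^ 2) / 2)|
        + |E ((n : ℝ) * h) * (1 - 5/2 * t ^ 2 + 3/2 * t ^ 3)|
        + |E (((n : ℝ) + 1) * h) * (1 - 5/2 * (1 - t) ^ 2 + 3/2 * (1 - t) ^ 3)|
        + |E (((n : ℝ) + 2) * h) * (1/2 * t ^ 2 * (t - 1))| := habcd _ _ _ _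
    _ ≤ 4 * M * h ^ 3 + 4 * M * h ^ 3 + 4 * M * h ^ 3 + 4 * M * h ^ 3 := by
        gcongr <;> [exact hterm _ _ hE1 hw1; exact hterm _ _ hE2 hw2;
          exact hterm _ _ hE3 hw3; exact hterm _ _ hE4 hw4]
    _ = 16 * M * h ^ 3 := by ring
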